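/- Let x ∈ ℝⁿ be decomposed as x = Π_u x + Π₁Π_s x + Π₂Π_s x, where ‖Π_u x‖ = ‖R₁x‖, ‖Π_s x‖ = ‖R₂x‖, Π₁ and Π₂ are complementary orthogonal projectors, and Π_u x lies in range(Π₁). If ‖R₁x‖/‖R₂x‖ > γ_ω > 1, then ‖Π₁x‖/‖x‖ > 1 − 2/(γ_ω − 1) and ‖Π₂x‖/‖x‖ < 1/(γ_ω − 1). -/

import Mathlib

open Matrix

/-- Euclidean norm of a vector in `ℝⁿ`. -/
noncomputable def evnorm {n : ℕ} (x : Fin n → ℝ) : ℝ :=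
  ‖(WithLp.equiv 2 (Fin n → ℝ)).symm x‖


lemma evnorm_nonneg {n : ℕ} (x : Fin n → ℝ) : 0 ≤ evnorm x := norm_nonneg _

lemma evnorm_add_le {n : ℕ} (x y : Fin n → ℝ) : evnorm (x + y) ≤ evnorm x + evnorm y := by
  unfold evnorm; rw [show (WithLp.equiv 2 (Fin n → ℝ)).symm (x + y) = (WithLp.equiv 2 (Fin n → ℝ)).symm x + (WithLp.equiv 2 (Fin n → ℝ)).symm y from rfl]; exact norm_add_le _ _

lemma evnorm_sq {n : ℕ} (x : Fin n → ℝ) : evnorm x ^ 2 = x ⬝ᵥ x := by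
  have h : (inner ℝ ((WithLp.equiv 2 (Fin n → ℝ)).symm x) ((WithLp.equiv 2 (Fin n → ℝ)).symm x) : ℝ)
      = ‖(WithLp.equiv 2 (Fin n → ℝ)).symm x‖ ^ 2 := real_inner_self_eq_norm_sq _
  rw [show inner ℝ ((WithLp.equiv 2 (Fin n → ℝ)).symm x) ((WithLp.equiv 2 (Fin n → ℝ)).symm x) = x ⬝ᵥ x from by rw [WithLp.equiv_symm_apply, EuclideanSpace.inner_toLp_toLp, star_trivial]] at h
  rw [evnorm, ← h]

lemma dot_le_evnorm {n : ℕ} (x y : Fin n → ℝ) : x ⬝ᵥ y ≤ evnorm x * evnorm y := by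
  have h := real_inner_le_norm ((WithLp.equiv 2 (Fin n → ℝ)).symm x) ((WithLp.equiv 2 (Fin n → ℝ)).symm y)
  rwa [show inner ℝ ((WithLp.equiv 2 (Fin n → ℝ)).symm x) ((WithLp.equiv 2 (Fin n → ℝ)).symm y) = x ⬝ᵥ y from by rw [WithLp.equiv_symm_apply, EuclideanSpace.inner_toLp_toLp, star_trivial, dotProduct_comm]] at h

lemma mulVec_dot_mulVec {n k : ℕ} (P : Matrix (Fin n) (Fin k) ℝ) (y : Fin n → ℝ)
    (w : Fin k → ℝ) : y ⬝ᵥ (P *ᵥ w) = (Pᵀ *ᵥ y) ⬝ᵥ w := by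
  rw [dotProduct_mulVec, mulVec_transpose]

lemma proj_contract {n k : ℕ} (P : Matrix (Fin n) (Fin k) ℝ) (hP : Pᵀ * P = 1)
    (y : Fin n → ℝ) : evnorm ((P * Pᵀ) *ᵥ y) ≤ evnorm y := by
  have hw : Pᵀ *ᵥ (P *ᵥ (Pᵀ *ᵥ y)) = Pᵀ *ᵥ y := by
    rw [mulVec_mulVec, mulVec_mulVec, hP, Matrix.one_mul]
  have hz' : (P * Pᵀ) *ᵥ y = P *ᵥ (Pᵀ *ᵥ y) := (mulVec_mulVec _ _ _).symm
  have hsq : evnorm ((P * Pᵀ) *ᵥ y) ^ 2 = y ⬝ᵥ ((P * Pᵀ) *ᵥ y) := by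
    have e1 := mulVec_dot_mulVec P (P *ᵥ (Pᵀ *ᵥ y)) (Pᵀ *ᵥ y)
    have e2 := mulVec_dot_mulVec P y (Pᵀ *ᵥ y)
    rw [evnorm_sq, hz', e1, hw, e2]
  have hcs := dot_le_evnorm y ((P * Pᵀ) *ᵥ y)
  rcases eq_or_lt_of_le (evnorm_nonneg ((P * Pᵀ) *ᵥ y)) with h0 | h0
  · rw [← h0]; exact evnorm_nonneg y
  · have h1 : evnorm ((P * Pᵀ) *ᵥ y) * evnorm ((P * Pᵀ) *ᵥ y)
        ≤ evnorm y * evnorm ((P * Pᵀ) *ᵥ y) := by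
      rw [← sq]; exact hsq ▸ hcs
    exact le_of_mul_le_mul_right h1 h0

lemma evnorm_neg {n : ℕ} (x : Fin n → ℝ) : evnorm (-x) = evnorm x := by
  unfold evnorm
  rw [show (WithLp.equiv 2 (Fin n → ℝ)).symm (-x) = -((WithLp.equiv 2 (Fin n → ℝ)).symm x) from rfl]
  exact norm_neg _


/-- With `x = Π_u x + Π₁ Π_s x + Π₂ Π_s x`, where `Π₁ = P₁P₁ᵀ`, `Π₂ = P₂P₂ᵀ` are
complementary orthogonal projectors, `Π_u x ∈ range Π₁`, `‖Π_u x‖ = ‖R₁ x‖`,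
`‖Π_s x‖ = ‖R₂ x‖`, and `‖R₁ x‖/‖R₂ x‖ > γ_ω > 1`, we have
`‖Π₁ x‖/‖x‖ > 1 - 2/(γ_ω - 1)` and `‖Π₂ x‖/‖x‖ < 1/(γ_ω - 1)`. -/
theorem projection_ratio_bounds {n k m : ℕ}
    (P₁ : Matrix (Fin n) (Fin k) ℝ) (P₂ : Matrix (Fin n) (Fin m) ℝ)
    (hP₁ : P₁ᵀ * P₁ = 1) (hP₂ : P₂ᵀ * P₂ = 1) (horth : P₁ᵀ * P₂ = 0)
    (hcomp : P₁ * P₁ᵀ + P₂ * P₂ᵀ = 1)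
    (R₁ : Matrix (Fin k) (Fin n) ℝ) (R₂ : Matrix (Fin m) (Fin n) ℝ)
    (x xu xs : Fin n → ℝ)
    (hdec : x = xu + xs)
    (hxu : (P₁ * P₁ᵀ) *ᵥ xu = xu)
    (hnu : evnorm xu = evnorm (R₁ *ᵥ x)) (hns : evnorm xs = evnorm (R₂ *ᵥ x))
    (γω : ℝ) (hγ : 1 < γω)
    (hratio : γω < evnorm (R₁ *ᵥ x) / evnorm (R₂ *ᵥ x)) :
    1 - 2 / (γω - 1) < evnorm ((P₁ * P₁ᵀ) *ᵥ x) / evnorm x ∧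
      evnorm ((P₂ * P₂ᵀ) *ᵥ x) / evnorm x < 1 / (γω - 1) := by
  set a := evnorm (R₁ *ᵥ x) with ha'
  set b := evnorm (R₂ *ᵥ x) with hb'
  have hγ1 : 0 < γω - 1 := by linarith
  have hb : 0 < b := by
    rcases eq_or_lt_of_le (evnorm_nonneg (R₂ *ᵥ x)) with h0 | h0
    · rw [hb', ← h0, div_zero] at hratio; linarith
    · exact h0
  have ha : γω * b < a := (lt_div_iff₀ hb).mp hratio
  have htri : a ≤ evnorm x + b := by
    have hxu' : xu = x + (-xs) := by rw [hdec]; abel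
    calc a = evnorm xu := hnu.symm
      _ = evnorm (x + (-xs)) := by rw [hxu']
      _ ≤ evnorm x + evnorm (-xs) := evnorm_add_le _ _
      _ = evnorm x + b := by rw [evnorm_neg, hns]
  have hxpos : (γω - 1) * b < evnorm x := by nlinarith
  have hx0 : 0 < evnorm x := lt_trans (by positivity) hxpos
  -- Π₂ x = Π₂ xs
  have h0 : P₂ᵀ * P₁ = 0 := by
    have := congrArg Matrix.transpose horth
    simpa using this
  have hzero : (P₂ * P₂ᵀ) * (P₁ * P₁ᵀ) = 0 := by
    rw [Matrix.mul_assoc, ← Matrix.mul_assoc P₂ᵀ P₁ P₁ᵀ, h0, Matrix.zero_mul, Matrix.mul_zero]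
  have hP2xu : (P₂ * P₂ᵀ) *ᵥ xu = 0 := by
    rw [← hxu, mulVec_mulVec, hzero, zero_mulVec]
  have hP2x : (P₂ * P₂ᵀ) *ᵥ x = (P₂ * P₂ᵀ) *ᵥ xs := by
    rw [hdec, mulVec_add, hP2xu, zero_add]
  have h2 : evnorm ((P₂ * P₂ᵀ) *ᵥ x) ≤ b := by
    rw [hP2x, ← hns]; exact proj_contract P₂ hP₂ xs
  have h2n : 0 ≤ evnorm ((P₂ * P₂ᵀ) *ᵥ x) := evnorm_nonneg _
  -- triangle for Π₁
  have hsum : (P₁ * P₁ᵀ) *ᵥ x + (P₂ * P₂ᵀ) *ᵥ x = x := by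
    rw [← add_mulVec, hcomp, one_mulVec]
  have h1 : evnorm x ≤ evnorm ((P₁ * P₁ᵀ) *ᵥ x) + evnorm ((P₂ * P₂ᵀ) *ᵥ x) := by
    conv_lhs => rw [← hsum]
    exact evnorm_add_le _ _
  constructor
  · rw [lt_div_iff₀ hx0]
    have hd : 2 / (γω - 1) * (γω - 1) = 2 := div_mul_cancel₀ _ (ne_of_gt hγ1)
    nlinarith
  · rw [div_lt_div_iff₀ hx0 hγ1]
    nlinarith
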